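/- Let f : I → I be a continuous interval map, x ∈ I with solenoidal ω-limit set structured by nested periodic intervals K_a (a ∈ Σ^t) of period p_t as usual, with the orbit of x contained in Q_t and avoiding the boundaries of the intervals K_a. For m ∈ ℕ ∪ {∞}, t ≥ 0, ε > 0, define N_m(x,t,ε) = card{(a,b) ∈ Σ^t × Σ^t : dist_m(K_a, K_b) < ε} and N°_m(x,t,ε) = card{(a,b) : diam_m(K_a, K_b) ≤ ε}, where dist_m(K_a,K_b) = max_{0≤i<m} dist(K_{a+i}, K_{b+i}) and diam_m(K_a,K_b) = max_{0≤i<m} diam(K_{a+i} ∪ K_{b+i}). Then N°_m(x,t,ε)·p_t^{−2} ≤ C̲_m(x,ε) ≤ C̄_m(x,ε) ≤ N_m(x,t,ε)·p_t^{−2}. -/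

import Mathlib

open Filter Metric Set
open scoped Classical

namespace RQA

variable {X : Type*} [MetricSpace X]

/-- Correlation sum `C_m(x,n,ε)` with respect to the Bowen metric `ρ_m`:
`ρ_m(f^[i] x, f^[j] x) ≤ ε ↔ ∀ k < m, dist (f^[i+k] x) (f^[j+k] x) ≤ ε`. -/
noncomputable def corrSum (f : X → X) (x : X) (m n : ℕ) (ε : ℝ) : ℝ :=
  (((Finset.range n ×ˢ Finset.range n).filter
      (fun p => ∀ k < m, dist (f^[p.1 + k] x) (f^[p.2 + k] x) ≤ ε)).card : ℝ) / (n : ℝ) ^ 2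

/-- Correlation sum `C_∞(x,n,ε)` with respect to the metric `ρ_∞`. -/
noncomputable def corrSumInf (f : X → X) (x : X) (n : ℕ) (ε : ℝ) : ℝ :=
  (((Finset.range n ×ˢ Finset.range n).filter
      (fun p => ∀ k : ℕ, dist (f^[p.1 + k] x) (f^[p.2 + k] x) ≤ ε)).card : ℝ) / (n : ℝ) ^ 2

/-- Lower asymptotic correlation sum `C̲_m(x,ε)`. -/
noncomputable def lowerCorr (f : X → X) (x : X) (m : ℕ) (ε : ℝ) : ℝ :=
  liminf (fun n => corrSum f x m n ε) atTop

/-- Upper asymptotic correlation sum `C̄_m(x,ε)`. -/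
noncomputable def upperCorr (f : X → X) (x : X) (m : ℕ) (ε : ℝ) : ℝ :=
  limsup (fun n => corrSum f x m n ε) atTop

/-- Recurrence `m`-determinism `DET_m(x,n,ε) = C_m(x,n,ε)/C_1(x,n,ε)`. -/
noncomputable def detSum (f : X → X) (x : X) (m n : ℕ) (ε : ℝ) : ℝ :=
  corrSum f x m n ε / corrSum f x 1 n ε

/-- Recurrence `∞`-determinism `DET_∞(x,n,ε) = C_∞(x,n,ε)/C_1(x,n,ε)`. -/
noncomputable def detSumInf (f : X → X) (x : X) (n : ℕ) (ε : ℝ) : ℝ :=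
  corrSumInf f x n ε / corrSum f x 1 n ε

/-- Lower asymptotic recurrence determinism `DET̲_m(x,ε)`. -/
noncomputable def lowerDet (f : X → X) (x : X) (m : ℕ) (ε : ℝ) : ℝ :=
  liminf (fun n => detSum f x m n ε) atTop

/-- Upper asymptotic recurrence determinism `DET̄_m(x,ε)`. -/
noncomputable def upperDet (f : X → X) (x : X) (m : ℕ) (ε : ℝ) : ℝ :=
  limsup (fun n => detSum f x m n ε) atTop

/-- `C̄_∞(x,ε) = lim_m C̄_m(x,ε)`; since `m ↦ C̄_m(x,ε)` is non-increasing,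
the limit equals the infimum over `m ≥ 1`. -/
noncomputable def upperCorrInf (f : X → X) (x : X) (ε : ℝ) : ℝ :=
  ⨅ m : ℕ, upperCorr f x (m + 1) ε

/-- `C̲_∞(x,ε) = lim_m C̲_m(x,ε)` (a limit of a non-increasing sequence). -/
noncomputable def lowerCorrInf (f : X → X) (x : X) (ε : ℝ) : ℝ :=
  ⨅ m : ℕ, lowerCorr f x (m + 1) ε

/-- `DET̄_∞(x,ε) = lim_m DET̄_m(x,ε)` (a limit of a non-increasing sequence). -/
noncomputable def upperDetInf (f : X → X) (x : X) (ε : ℝ) : ℝ :=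
  ⨅ m : ℕ, upperDet f x (m + 1) ε

/-- `DET̲_∞(x,ε) = lim_m DET̲_m(x,ε)` (a limit of a non-increasing sequence). -/
noncomputable def lowerDetInf (f : X → X) (x : X) (ε : ℝ) : ℝ :=
  ⨅ m : ℕ, lowerDet f x (m + 1) ε

/-- The ω-limit set of `x`: the set of limit points of the trajectory `(f^[n] x)`. -/
def omegaSet (f : X → X) (x : X) : Set X :=
  {y | ∃ φ : ℕ → ℕ, StrictMono φ ∧ Tendsto (fun n => f^[φ n] x) atTop (nhds y)}

/-- Distance between two subsets of `ℝ`. -/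
noncomputable def setDist (A B : Set ℝ) : ℝ :=
  sInf {d | ∃ a ∈ A, ∃ b ∈ B, d = dist a b}

/-- The binary word of length `t` given by the binary digits of `n`
(the 2-adic encoding, least significant digit first; addition of integers to
words is addition with carry from left to right, i.e. ordinary addition of the
encoded values modulo `2^t`). -/
def word (t n : ℕ) : Fin t → Bool := fun i => n.testBit i.val

/-- The value `∑ w_i 2^i` of a binary word under the 2-adic encoding. -/
def encodeWord {t : ℕ} (w : Fin t → Bool) : ℕ :=
  ∑ i : Fin t, if w i then 2 ^ i.val else 0

end RQA

open RQA


lemma cardModLe (p : ℕ) (hp : 0 < p) (n a : ℕ) :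
    ((Finset.range n).filter (fun i => i % p = a)).card ≤ n / p + 1 := by
  have := Finset.card_le_card_of_injOn (f := fun i => i / p)
    (s := (Finset.range n).filter (fun i => i % p = a)) (t := Finset.range (n / p + 1))
    (by intro i hi
        simp only [Finset.mem_coe, Finset.mem_filter, Finset.mem_range] at hi ⊢
        exact Nat.lt_succ_of_le (Nat.div_le_div_right hi.1.le))
    (by intro i hi j hj hij
        simp only [Finset.mem_coe, Finset.mem_filter, Finset.mem_range] at hi hj
        have hi2 := Nat.div_add_mod i p
        have hj2 := Nat.div_add_mod j p
        simp only at hij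
        rw [hij, hi.2] at hi2
        rw [hj.2] at hj2
        omega)
  simpa using this

lemma leCardMod (p : ℕ) (hp : 0 < p) (n a : ℕ) (ha : a < p) :
    n / p ≤ ((Finset.range n).filter (fun i => i % p = a)).card := by
  have := Finset.card_le_card_of_injOn (f := fun t => a + p * t)
    (s := Finset.range (n / p)) (t := (Finset.range n).filter (fun i => i % p = a))
    (by intro t ht
        simp only [Finset.mem_coe, Finset.mem_range] at ht
        simp only [Finset.mem_coe, Finset.mem_filter, Finset.mem_range]
        constructor
        · have h1 : p * (t + 1) ≤ p * (n / p) := Nat.mul_le_mul_left p ht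
          have h2 : p * (n / p) ≤ n := by rw [mul_comm]; exact Nat.div_mul_le_self n p
          have h3 : p * (t + 1) = p * t + p := by ring
          omega
        · simp [Nat.add_mul_mod_self_left, Nat.mod_eq_of_lt ha])
    (by intro i _ j _ h
        simp only at h
        have h2 := Nat.add_left_cancel h
        exact Nat.eq_of_mul_eq_mul_left hp h2)
  simpa using this

lemma cardRes (p n : ℕ) (S : Finset (ℕ × ℕ)) :
    ((Finset.range n ×ˢ Finset.range n).filter (fun q => (q.1 % p, q.2 % p) ∈ S)).card
      = ∑ s ∈ S, (((Finset.range n).filter (fun i => i % p = s.1)).card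
          * ((Finset.range n).filter (fun i => i % p = s.2)).card) := by
  rw [Finset.card_eq_sum_card_fiberwise
      (s := (Finset.range n ×ˢ Finset.range n).filter (fun q => (q.1 % p, q.2 % p) ∈ S))
      (f := fun q : ℕ × ℕ => (q.1 % p, q.2 % p)) (t := S)
      (by intro q hq; exact (Finset.mem_filter.mp (Finset.mem_coe.mp hq)).2)]
  refine Finset.sum_congr rfl fun s hs => ?_
  have h1 : ((Finset.range n ×ˢ Finset.range n).filter (fun q => (q.1 % p, q.2 % p) ∈ S)).filter
        (fun q => (q.1 % p, q.2 % p) = s)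
      = (Finset.range n ×ˢ Finset.range n).filter (fun q => q.1 % p = s.1 ∧ q.2 % p = s.2) := by
    rw [Finset.filter_filter]
    refine Finset.filter_congr fun q _ => ?_
    constructor
    · rintro ⟨_, h⟩; exact ⟨congrArg Prod.fst h, congrArg Prod.snd h⟩
    · rintro ⟨h1, h2⟩
      have : (q.1 % p, q.2 % p) = s := Prod.ext h1 h2
      exact ⟨this ▸ hs, this⟩
  rw [h1, Finset.filter_product (fun a => a % p = s.1) (fun b => b % p = s.2), Finset.card_product]

lemma tendstoDiv (p : ℕ) (hp : 0 < p) :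
    Tendsto (fun n : ℕ => ((n / p : ℕ) : ℝ) / (n : ℝ)) atTop (nhds (1 / (p : ℝ))) := by
  have hpR : (0 : ℝ) < p := Nat.cast_pos.mpr hp
  have hlow : Tendsto (fun n : ℕ => 1 / (p : ℝ) - 1 / (n : ℝ)) atTop (nhds (1 / (p : ℝ))) := by
    have := tendsto_one_div_atTop_nhds_zero_nat (𝕜 := ℝ)
    simpa using (tendsto_const_nhds (x := 1 / (p:ℝ)) (f := atTop)).sub this
  refine tendsto_of_tendsto_of_tendsto_of_le_of_le' hlow tendsto_const_nhds ?_ ?_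
  · filter_upwards [eventually_gt_atTop 0] with n hn
    have hnR : (0 : ℝ) < n := Nat.cast_pos.mpr hn
    rw [sub_le_iff_le_add, ← add_div, div_le_div_iff₀ hpR hnR]
    have h1 : p * (n / p) + n % p = n := Nat.div_add_mod n p
    have h2 : n % p < p := Nat.mod_lt n hp
    have h4 : (n : ℝ) ≤ (p : ℝ) * ((n / p : ℕ) : ℝ) + p := by
      have : (n : ℕ) ≤ p * (n / p) + p := by omega
      exact_mod_cast this
    nlinarith [hnR, hpR]
  · filter_upwards [eventually_gt_atTop 0] with n hn
    have hnR : (0 : ℝ) < n := Nat.cast_pos.mpr hn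
    have h1 : ((n / p : ℕ) : ℝ) ≤ (n : ℝ) / p := Nat.cast_div_le
    calc ((n / p : ℕ) : ℝ) / n ≤ ((n : ℝ) / p) / n := by gcongr
      _ = 1 / p := by field_simp
  
lemma tendstoDiv' (p : ℕ) (hp : 0 < p) :
    Tendsto (fun n : ℕ => (((n / p : ℕ) : ℝ) + 1) / (n : ℝ)) atTop (nhds (1 / (p : ℝ))) := by
  have h1 := tendstoDiv p hp
  have h2 := tendsto_one_div_atTop_nhds_zero_nat (𝕜 := ℝ)
  have h3 := h1.add h2
  rw [add_zero] at h3
  refine h3.congr' ?_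
  filter_upwards [eventually_gt_atTop 0] with n hn
  have hnR : (0 : ℝ) < n := Nat.cast_pos.mpr hn
  field_simp
lemma setDist_lt_of_pt {ε : ℝ} (hε : 0 < ε) (y z : ℝ) (hyz : y < z) (B : Set ℝ) (u v : ℝ)
    (hu : u ∈ Set.Ioo y z) (hv : v ∈ B) (hd : dist u v ≤ ε)
    (hcase : Set.Icc y z = B ∨ v ∉ Set.Icc y z) :
    setDist (Set.Icc y z) B < ε := by
  have hbdd : BddBelow {d | ∃ a ∈ Set.Icc y z, ∃ b ∈ B, d = dist a b} := by
    refine ⟨0, ?_⟩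
    rintro d ⟨a, _, b, _, rfl⟩
    exact dist_nonneg
  have hle : ∀ a ∈ Set.Icc y z, ∀ b ∈ B, setDist (Set.Icc y z) B ≤ dist a b := by
    intro a ha b hb
    exact csInf_le hbdd ⟨a, ha, b, hb, rfl⟩
  have huI : u ∈ Set.Icc y z := Set.mem_Icc.mpr ⟨hu.1.le, hu.2.le⟩
  rcases hcase with heq | hout
  · have : setDist (Set.Icc y z) B ≤ dist u u := hle u huI u (heq ▸ huI)
    rw [dist_self] at this
    linarith
  · have hv' : v < y ∨ z < v := by
      by_contra h
      push_neg at h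
      exact hout (Set.mem_Icc.mpr ⟨h.1, h.2⟩)
    rcases hv' with h | h
    · have h2 : setDist (Set.Icc y z) B ≤ dist y v := hle y (Set.mem_Icc.mpr ⟨le_refl y, hyz.le⟩) v hv
      have h3 : dist y v < dist u v := by
        rw [Real.dist_eq, Real.dist_eq, abs_of_pos (by linarith), abs_of_pos (by linarith [hu.1])]
        linarith [hu.1]
      linarith
    · have h2 : setDist (Set.Icc y z) B ≤ dist z v := hle z (Set.mem_Icc.mpr ⟨hyz.le, le_refl z⟩) v hv
      have h3 : dist z v < dist u v := by
        rw [Real.dist_eq, Real.dist_eq, abs_of_neg (by linarith), abs_of_neg (by linarith [hu.2])]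
        linarith [hu.2]
      linarith
lemma RQAmaster (f : ℝ → ℝ) (x : ℝ) (p : ℕ) (hp : 0 < p) (K : ℕ → Set ℝ)
    (hKper : ∀ i, K (i + p) = K i)
    (hK : ∀ i, ∃ y z : ℝ, y < z ∧ K i = Icc y z)
    (hdisj : ∀ i j : ℕ, i < p → j < p → i ≠ j → Disjoint (K i) (K j))
    (horb : ∀ i, f^[i] x ∈ interior (K i))
    (ε : ℝ) (hε : 0 < ε) (m : ℕ) :
    (((Finset.range p ×ˢ Finset.range p).filter
        (fun q => ∀ i < m, Metric.diam (K (q.1 + i) ∪ K (q.2 + i)) ≤ ε)).card : ℝ) / (p:ℝ)^2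
      ≤ lowerCorr f x m ε ∧
    lowerCorr f x m ε ≤ upperCorr f x m ε ∧
    upperCorr f x m ε ≤ (((Finset.range p ×ˢ Finset.range p).filter
        (fun q => ∀ i < m, setDist (K (q.1 + i)) (K (q.2 + i)) < ε)).card : ℝ) / (p:ℝ)^2 := by
  have Kmod : ∀ n, K n = K (n % p) := by
    intro n
    induction n using Nat.strong_induction_on with
    | _ n ih =>
      by_cases h : n < p
      · rw [Nat.mod_eq_of_lt h]
      · push_neg at h
        have h2 : n - p < n := by omega
        have h3 : n - p + p = n := by omega
        calc K n = K (n - p + p) := by rw [h3]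
          _ = K (n - p) := hKper _
          _ = K ((n - p) % p) := ih _ h2
          _ = K (n % p) := by rw [← Nat.mod_eq_sub_mod h]
  have Kidx : ∀ i k : ℕ, K (i % p + k) = K (i + k) := by
    intro i k
    rw [Kmod (i % p + k), Kmod (i + k), Nat.mod_add_mod]
  have key1 : ∀ i j k : ℕ, dist (f^[i + k] x) (f^[j + k] x) ≤ ε →
      setDist (K (i % p + k)) (K (j % p + k)) < ε := by
    intro i j k hd
    rw [Kidx, Kidx]
    obtain ⟨y, z, hyz, hA⟩ := hK (i + k)
    have hu : f^[i + k] x ∈ interior (K (i + k)) := horb _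
    have hv : f^[j + k] x ∈ K (j + k) := interior_subset (horb _)
    rw [hA] at hu ⊢
    rw [interior_Icc] at hu
    refine setDist_lt_of_pt hε y z hyz _ _ _ hu hv hd ?_
    by_cases hres : (i + k) % p = (j + k) % p
    · left
      rw [← hA, Kmod (i + k), hres, ← Kmod (j + k)]
    · right
      have hdisj2 : Disjoint (K (i + k)) (K (j + k)) := by
        rw [Kmod (i + k), Kmod (j + k)]
        exact hdisj _ _ (Nat.mod_lt _ hp) (Nat.mod_lt _ hp) hres
      intro hvA
      rw [← hA] at hvA
      exact Set.disjoint_left.mp hdisj2 hvA hv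
  have key2 : ∀ i j k : ℕ, Metric.diam (K (i % p + k) ∪ K (j % p + k)) ≤ ε →
      dist (f^[i + k] x) (f^[j + k] x) ≤ ε := by
    intro i j k hdm
    rw [Kidx, Kidx] at hdm
    have hu : f^[i + k] x ∈ K (i + k) := interior_subset (horb _)
    have hv : f^[j + k] x ∈ K (j + k) := interior_subset (horb _)
    obtain ⟨y1, z1, _, hA⟩ := hK (i + k)
    obtain ⟨y2, z2, _, hB⟩ := hK (j + k)
    have hbd : Bornology.IsBounded (K (i + k) ∪ K (j + k)) := by
      rw [hA, hB]
      exact (isBounded_Icc _ _).union (isBounded_Icc _ _)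
    exact (Metric.dist_le_diam_of_mem hbd (Set.mem_union_left _ hu)
      (Set.mem_union_right _ hv)).trans hdm
  set Sd := (Finset.range p ×ˢ Finset.range p).filter
      (fun q => ∀ i < m, Metric.diam (K (q.1 + i) ∪ K (q.2 + i)) ≤ ε) with hSd
  set Sn := (Finset.range p ×ˢ Finset.range p).filter
      (fun q => ∀ i < m, setDist (K (q.1 + i)) (K (q.2 + i)) < ε) with hSn
  set T : ℕ → Finset (ℕ × ℕ) := fun n => (Finset.range n ×ˢ Finset.range n).filter
      (fun q => ∀ k < m, dist (f^[q.1 + k] x) (f^[q.2 + k] x) ≤ ε) with hT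
  have hcorr : ∀ n, corrSum f x m n ε = ((T n).card : ℝ) / (n : ℝ) ^ 2 := fun n => rfl
  -- upper cardinality bound
  have hTcard : ∀ n, (T n).card ≤ Sn.card * (n / p + 1) ^ 2 := by
    intro n
    have hsub : T n ⊆ (Finset.range n ×ˢ Finset.range n).filter
        (fun q => (q.1 % p, q.2 % p) ∈ Sn) := by
      intro q hq
      rw [Finset.mem_filter] at hq ⊢
      refine ⟨hq.1, ?_⟩
      rw [hSn, Finset.mem_filter]
      refine ⟨Finset.mem_product.mpr ⟨Finset.mem_range.mpr (Nat.mod_lt _ hp),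
        Finset.mem_range.mpr (Nat.mod_lt _ hp)⟩, fun i hi => key1 q.1 q.2 i (hq.2 i hi)⟩
    calc (T n).card ≤ _ := Finset.card_le_card hsub
      _ = ∑ s ∈ Sn, (((Finset.range n).filter (fun i => i % p = s.1)).card
          * ((Finset.range n).filter (fun i => i % p = s.2)).card) := cardRes p n Sn
      _ ≤ ∑ _s ∈ Sn, (n / p + 1) * (n / p + 1) := Finset.sum_le_sum
          (fun s _ => Nat.mul_le_mul (cardModLe p hp n s.1) (cardModLe p hp n s.2))
      _ = Sn.card * (n / p + 1) ^ 2 := by rw [Finset.sum_const, smul_eq_mul]; ring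
  -- lower cardinality bound
  have hDcard : ∀ n, Sd.card * (n / p) ^ 2 ≤ (T n).card := by
    intro n
    have hsub : (Finset.range n ×ˢ Finset.range n).filter
        (fun q => (q.1 % p, q.2 % p) ∈ Sd) ⊆ T n := by
      intro q hq
      rw [Finset.mem_filter] at hq
      rw [hT, Finset.mem_filter]
      refine ⟨hq.1, ?_⟩
      have h2 := (Finset.mem_filter.mp hq.2).2
      exact fun k hk => key2 q.1 q.2 k (h2 k hk)
    calc Sd.card * (n / p) ^ 2 = ∑ _s ∈ Sd, (n / p) * (n / p) := by
          rw [Finset.sum_const, smul_eq_mul]; ring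
      _ ≤ ∑ s ∈ Sd, (((Finset.range n).filter (fun i => i % p = s.1)).card
          * ((Finset.range n).filter (fun i => i % p = s.2)).card) := by
          refine Finset.sum_le_sum fun s hs => ?_
          have hs' := Finset.mem_product.mp (Finset.mem_filter.mp hs).1
          exact Nat.mul_le_mul (leCardMod p hp n s.1 (Finset.mem_range.mp hs'.1))
            (leCardMod p hp n s.2 (Finset.mem_range.mp hs'.2))
      _ = _ := (cardRes p n Sd).symm
      _ ≤ (T n).card := Finset.card_le_card hsub
  -- real bounds
  have hlowR : ∀ᶠ n : ℕ in atTop,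
      (Sd.card : ℝ) * (((n / p : ℕ) : ℝ) / (n : ℝ)) ^ 2 ≤ corrSum f x m n ε := by
    filter_upwards [eventually_ge_atTop 1] with n hn
    have hnR : (0 : ℝ) < n := by exact_mod_cast hn
    have h2 : ((Sd.card * (n / p) ^ 2 : ℕ) : ℝ) ≤ ((T n).card : ℝ) := Nat.cast_le.mpr (hDcard n)
    push_cast at h2
    rw [hcorr n, div_pow, ← mul_div_assoc]
    exact div_le_div_of_nonneg_right h2 (by positivity) |>.trans_eq rfl
  have hhighR : ∀ᶠ n : ℕ in atTop,
      corrSum f x m n ε ≤ (Sn.card : ℝ) * ((((n / p : ℕ) : ℝ) + 1) / (n : ℝ)) ^ 2 := by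
    filter_upwards [eventually_ge_atTop 1] with n hn
    have hnR : (0 : ℝ) < n := by exact_mod_cast hn
    have h2 : ((T n).card : ℝ) ≤ ((Sn.card * (n / p + 1) ^ 2 : ℕ) : ℝ) := Nat.cast_le.mpr (hTcard n)
    push_cast at h2
    rw [hcorr n, div_pow, ← mul_div_assoc]
    exact div_le_div_of_nonneg_right h2 (by positivity) |>.trans_eq rfl
  have tlow : Tendsto (fun n : ℕ => (Sd.card : ℝ) * (((n / p : ℕ) : ℝ) / (n : ℝ)) ^ 2) atTop
      (nhds ((Sd.card : ℝ) / (p : ℝ) ^ 2)) := by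
    have h := ((tendstoDiv p hp).pow 2).const_mul (Sd.card : ℝ)
    simpa [div_pow, mul_one_div, div_eq_mul_inv] using h
  have thigh : Tendsto (fun n : ℕ => (Sn.card : ℝ) * ((((n / p : ℕ) : ℝ) + 1) / (n : ℝ)) ^ 2) atTop
      (nhds ((Sn.card : ℝ) / (p : ℝ) ^ 2)) := by
    have h := ((tendstoDiv' p hp).pow 2).const_mul (Sn.card : ℝ)
    simpa [div_pow, mul_one_div, div_eq_mul_inv] using h
  have hcorr0 : ∀ n, 0 ≤ corrSum f x m n ε := fun n => by
    rw [hcorr n]; exact div_nonneg (Nat.cast_nonneg _) (sq_nonneg _)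
  have hcorr1 : ∀ n, corrSum f x m n ε ≤ 1 := by
    intro n
    rcases Nat.eq_zero_or_pos n with h | h
    · subst h; simp [corrSum]
    · have hc : (T n).card ≤ n ^ 2 := by
        calc (T n).card ≤ (Finset.range n ×ˢ Finset.range n).card :=
              Finset.card_le_card (Finset.filter_subset _ _)
          _ = n ^ 2 := by rw [Finset.card_product, Finset.card_range]; ring
      rw [hcorr n]
      apply div_le_one_of_le₀
      · exact_mod_cast hc
      · positivity
  have hBle : IsBoundedUnder (· ≤ ·) atTop (fun n => corrSum f x m n ε) :=
    isBoundedUnder_of ⟨1, hcorr1⟩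
  have hBge : IsBoundedUnder (· ≥ ·) atTop (fun n => corrSum f x m n ε) :=
    isBoundedUnder_of ⟨0, hcorr0⟩
  refine ⟨?_, ?_, ?_⟩
  · rw [lowerCorr, ← tlow.liminf_eq]
    exact liminf_le_liminf hlowR tlow.isBoundedUnder_ge hBle.isCoboundedUnder_ge
  · exact liminf_le_limsup hBle hBge
  · rw [upperCorr, ← thigh.limsup_eq]
    exact limsup_le_limsup hhighR hBge.isCoboundedUnder_le thigh.isBoundedUnder_le

/-- interval-counting bounds for the asymptotic correlation sums:
`N°_m(x,t,ε)/p_t² ≤ C̲_m(x,ε) ≤ C̄_m(x,ε) ≤ N_m(x,t,ε)/p_t²` (for a fixed level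
of the solenoidal structure, with `K i` the `p`-periodically indexed intervals,
`f(K_i) ⊆ K_{i+1}`, and the orbit of `x` avoiding the boundaries).
Here `dist_m(K_a,K_b) < ε ↔ ∀ i < m, dist(K_{a+i},K_{b+i}) < ε` and
`diam_m(K_a,K_b) ≤ ε ↔ ∀ i < m, diam(K_{a+i} ∪ K_{b+i}) ≤ ε`; the case
`m = ∞` is stated with the quantifier over all `i`. -/
theorem stmt_14 (f : ℝ → ℝ) (hf : Continuous f) (x : ℝ)
    (p : ℕ) (hp : 0 < p) (K : ℕ → Set ℝ)
    (hKper : ∀ i, K (i + p) = K i)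
    (hK : ∀ i, ∃ y z : ℝ, y < z ∧ K i = Icc y z)
    (hdisj : ∀ i j : ℕ, i < p → j < p → i ≠ j → Disjoint (K i) (K j))
    (hdyn : ∀ i, f '' K i ⊆ K (i + 1))
    (horb : ∀ i, f^[i] x ∈ interior (K i))
    (ε : ℝ) (hε : 0 < ε) :
    (∀ m : ℕ, 0 < m →
      ((((Finset.range p ×ˢ Finset.range p).filter
            (fun q => ∀ i < m, Metric.diam (K (q.1 + i) ∪ K (q.2 + i)) ≤ ε)).card : ℝ)
            / (p : ℝ) ^ 2 ≤ lowerCorr f x m ε ∧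
        lowerCorr f x m ε ≤ upperCorr f x m ε ∧
        upperCorr f x m ε ≤
          (((Finset.range p ×ˢ Finset.range p).filter
            (fun q => ∀ i < m, setDist (K (q.1 + i)) (K (q.2 + i)) < ε)).card : ℝ)
            / (p : ℝ) ^ 2)) ∧
    ((((Finset.range p ×ˢ Finset.range p).filter
          (fun q => ∀ i : ℕ, Metric.diam (K (q.1 + i) ∪ K (q.2 + i)) ≤ ε)).card : ℝ)
          / (p : ℝ) ^ 2 ≤ lowerCorrInf f x ε ∧
      lowerCorrInf f x ε ≤ upperCorrInf f x ε ∧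
      upperCorrInf f x ε ≤
        (((Finset.range p ×ˢ Finset.range p).filter
          (fun q => ∀ i : ℕ, setDist (K (q.1 + i)) (K (q.2 + i)) < ε)).card : ℝ)
          / (p : ℝ) ^ 2) := by
  have master := RQAmaster f x p hp K hKper hK hdisj horb ε hε
  constructor
  · intro m _
    exact master m
  · have h0 : ∀ m : ℕ, 0 ≤ lowerCorr f x (m + 1) ε :=
      fun m => le_trans (by positivity) (master (m + 1)).1
    refine ⟨?_, ?_, ?_⟩
    · rw [lowerCorrInf]
      apply le_ciInf
      intro m
      refine le_trans ?_ (master (m + 1)).1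
      have hsub : (Finset.range p ×ˢ Finset.range p).filter
            (fun q => ∀ i : ℕ, Metric.diam (K (q.1 + i) ∪ K (q.2 + i)) ≤ ε) ⊆
          (Finset.range p ×ˢ Finset.range p).filter
            (fun q => ∀ i < m + 1, Metric.diam (K (q.1 + i) ∪ K (q.2 + i)) ≤ ε) := by
        intro q hq
        rw [Finset.mem_filter] at hq ⊢
        exact ⟨hq.1, fun i _ => hq.2 i⟩
      gcongr

    · exact ciInf_mono ⟨0, by rintro _ ⟨m, rfl⟩; exact h0 m⟩ (fun m => (master (m + 1)).2.1)
    · set wit : ℕ × ℕ → ℕ :=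
        fun q => sInf {i | ¬ setDist (K (q.1 + i)) (K (q.2 + i)) < ε} with hwit
      set M := (Finset.range p ×ˢ Finset.range p).sup wit with hM
      have hsub : (Finset.range p ×ˢ Finset.range p).filter
            (fun q => ∀ i < M + 1, setDist (K (q.1 + i)) (K (q.2 + i)) < ε) ⊆
          (Finset.range p ×ˢ Finset.range p).filter
            (fun q => ∀ i : ℕ, setDist (K (q.1 + i)) (K (q.2 + i)) < ε) := by
        intro q hq
        rw [Finset.mem_filter] at hq ⊢
        refine ⟨hq.1, ?_⟩
        by_contra hc
        rw [not_forall] at hc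
        obtain ⟨i, hi⟩ := hc
        have hne : {i | ¬ setDist (K (q.1 + i)) (K (q.2 + i)) < ε}.Nonempty := ⟨i, hi⟩
        have hmem := Nat.sInf_mem hne
        have hle : wit q ≤ M := Finset.le_sup hq.1
        exact hmem (hq.2 (wit q) (Nat.lt_succ_of_le hle))
      have hb : BddBelow (Set.range fun m => upperCorr f x (m + 1) ε) :=
        ⟨0, by rintro _ ⟨m, rfl⟩; exact le_trans (h0 m) (master (m + 1)).2.1⟩
      rw [upperCorrInf]
      refine le_trans (ciInf_le hb M) ?_
      refine le_trans (master (M + 1)).2.2 ?_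
      gcongr
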